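/- A finite group G has exactly |G| − 2 cyclic subgroups if and only if G is isomorphic to C_4 × C_2, D_8 × C_2, C_6, or D_12. -/

import Mathlib

set_option linter.unusedSectionVars false
set_option maxHeartbeats 1000000
open Subgroup



section Helpers

variable {G : Type*} [Group G]

lemma isCyclic_zpowers (g : G) : IsCyclic (zpowers g) :=
  ⟨⟨g, mem_zpowers g⟩, fun x => by
    obtain ⟨k, hk⟩ := x.2
    exact ⟨k, Subtype.ext (by simpa using hk)⟩⟩

lemma subgroup_eq_of_le_of_card_le [Finite G] {H K : Subgroup G} (h : H ≤ K)
    (hc : Nat.card K ≤ Nat.card H) : H = K := by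
  have h1 : (H : Set G) ⊆ (K : Set G) := h
  have h2 : (K : Set G).ncard ≤ (H : Set G).ncard := by
    rwa [← Nat.card_coe_set_eq, ← Nat.card_coe_set_eq]
  exact SetLike.coe_injective (Set.eq_of_subset_of_ncard_le h1 h2 (Set.toFinite _))

lemma zpowers_eq_of_mem [Finite G] {a b : G} (h : a ∈ zpowers b)
    (ho : orderOf b ≤ orderOf a) : zpowers a = zpowers b := by
  apply subgroup_eq_of_le_of_card_le (zpowers_le.mpr h)
  simpa [Nat.card_zpowers] using ho

lemma zpow_eq_zpow_of_zmod {x : G} {n : ℕ} (hx : orderOf x = n) {i j : ℤ}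
    (h : (i : ZMod n) = (j : ZMod n)) : x ^ i = x ^ j := by
  rw [zpow_eq_zpow_iff_modEq, hx]
  exact (ZMod.intCast_eq_intCast_iff _ _ _).mp h

lemma zmod_of_zpow_eq {x : G} {n : ℕ} (hx : orderOf x = n) {i j : ℤ}
    (h : x ^ i = x ^ j) : (i : ZMod n) = (j : ZMod n) := by
  rw [ZMod.intCast_eq_intCast_iff]
  rw [zpow_eq_zpow_iff_modEq, hx] at h
  exact h

lemma valCast {n : ℕ} [NeZero n] (a : ZMod n) : (((a.val : ℤ) : ZMod n)) = a := by
  push_cast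
  simp

lemma mem_zpowers_elim [Finite G] {a b : G} (hb : b ∈ zpowers a) :
    ∃ k : ℕ, k < orderOf a ∧ a ^ (k : ℤ) = b := by
  obtain ⟨k, hk⟩ := hb
  have h0 : 0 < orderOf a := orderOf_pos a
  refine ⟨(k % (orderOf a)).toNat, ?_, ?_⟩
  · have := Int.emod_lt_of_pos k (b := (orderOf a : ℤ)) (by exact_mod_cast h0)
    have := Int.emod_nonneg k (b := (orderOf a : ℤ)) (by exact_mod_cast h0.ne')
    omega
  · have h1 : ((k % (orderOf a)).toNat : ℤ) = k % (orderOf a) := by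
      have := Int.emod_nonneg k (b := (orderOf a : ℤ)) (by exact_mod_cast h0.ne')
      omega
    rw [h1, zpow_mod_orderOf]
    exact hk

lemma totient_ne_three (n : ℕ) : Nat.totient n ≠ 3 := by
  rcases le_or_gt n 2 with h | h
  · interval_cases n <;> decide
  · intro hc
    obtain ⟨k, hk⟩ := Nat.totient_even h
    omega

lemma totient_le_two_cases {n : ℕ} (hn : n ≠ 0) (h : ∀ d, d ∣ n → Nat.totient d ≤ 2) :
    n = 1 ∨ n = 2 ∨ n = 3 ∨ n = 4 ∨ n = 6 := by
  have hp : ∀ p, p.Prime → p ∣ n → p ≤ 3 := by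
    intro p hpp hd
    by_contra hlt
    have := h p hd
    rw [Nat.totient_prime hpp] at this
    omega
  have h8 : ¬ (8 ∣ n) := by
    intro hd
    have h1 := h 8 hd
    rw [show Nat.totient 8 = 4 from by decide] at h1
    omega
  have h9 : ¬ (9 ∣ n) := by
    intro hd
    have h1 := h 9 hd
    rw [show Nat.totient 9 = 6 from by decide] at h1
    omega
  have h12 : ¬ (12 ∣ n) := by
    intro hd
    have h1 := h 12 hd
    rw [show Nat.totient 12 = 4 from by decide] at h1
    omega
  have key : ∀ m : ℕ, m ≠ 0 → m ∣ n → m = 1 ∨ m = 2 ∨ m = 3 ∨ m = 4 ∨ m = 6 := by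
    intro m
    induction m using Nat.strong_induction_on with
    | _ m ih =>
      intro hm0 hmd
      rcases Nat.lt_or_ge m 2 with h1 | h1
      · left; omega
      · have hpm := Nat.minFac_prime (n := m) (by omega)
        have hple := hp _ hpm ((Nat.minFac_dvd m).trans hmd)
        have h2le := hpm.two_le
        obtain ⟨q, hq⟩ := Nat.minFac_dvd m
        have hq0 : q ≠ 0 := by rintro rfl; simp at hq; omega
        have hqlt : q < m := by
          rw [hq]; nlinarith [Nat.pos_of_ne_zero hq0]
        have hqd : q ∣ n := (Dvd.intro_left _ hq.symm).trans hmd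
        have hpcase : m.minFac = 2 ∨ m.minFac = 3 := by omega
        have h18 : ¬ (18 ∣ n) := fun hd => h9 ((by norm_num : (9:ℕ) ∣ 18).trans hd)
        rcases ih q hqlt hq0 hqd with h | h | h | h | h <;>
          rcases hpcase with hh | hh <;>
          rw [hh, h] at hq <;> norm_num at hq <;> subst hq <;>
          simp_all
  exact (key n hn dvd_rfl).imp id id

end Helpers


section Cons

variable {G : Type*} [Group G]

lemma zpow_eq_zpow_of_zmod'' {x : G} {n : ℕ} (hx : x ^ (n : ℤ) = 1) {i j : ℤ}
    (h : (i : ZMod n) = (j : ZMod n)) : x ^ i = x ^ j := by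
  have hm : i ≡ j [ZMOD (n:ℕ)] := (ZMod.intCast_eq_intCast_iff _ _ _).mp h
  obtain ⟨d, hd⟩ := Int.ModEq.dvd hm
  have : j = i + n * d := by omega
  rw [this, zpow_add, zpow_mul, hx, one_zpow, mul_one]

/-- homomorphism from Multiplicative (ZMod n) given an element with t^n = 1 -/
def cyclicHom (n : ℕ) [NeZero n] (t : G) (ht : t ^ (n : ℤ) = 1) :
    Multiplicative (ZMod n) →* G :=
  MonoidHom.mk' (fun a => t ^ ((Multiplicative.toAdd a).val : ℤ))
    (by
      intro a b
      show t ^ (((Multiplicative.toAdd a + Multiplicative.toAdd b).val : ℤ)) = _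
      rw [← zpow_add]
      apply zpow_eq_zpow_of_zmod'' ht
      push_cast
      simp)

lemma cyclicHom_apply (n : ℕ) [NeZero n] (t : G) (ht : t ^ (n : ℤ) = 1) (a : ZMod n) :
    cyclicHom n t ht (Multiplicative.ofAdd a) = t ^ (a.val : ℤ) := rfl

/-- homomorphism from the dihedral group -/
def dihedralHom (n : ℕ) [NeZero n] (w s : G) (hw : w ^ (n : ℤ) = 1) (hs : s * s = 1)
    (hrel : s * w * s = w⁻¹) : DihedralGroup n →* G := by
  have hsinv : s⁻¹ = s := inv_eq_of_mul_eq_one_right hs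
  have hconj : ∀ k : ℤ, s * w ^ k * s = w ^ (-k) := by
    intro k
    have h1 : (s * w * s⁻¹) ^ k = s * w ^ k * s⁻¹ := conj_zpow
    rw [hsinv] at h1
    rw [← h1, hrel, inv_zpow, ← zpow_neg]
  have key : ∀ k : ℤ, s * (s * w ^ k * s) = w ^ k * s := by
    intro k
    rw [← mul_assoc, ← mul_assoc, hs, one_mul]
  have hswap : ∀ k : ℤ, w ^ k * s = s * w ^ (-k) := by
    intro k
    rw [← key k, hconj]
  exact MonoidHom.mk'
    (fun d => match d with
      | .r i => w ^ (i.val : ℤ)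
      | .sr i => s * w ^ (i.val : ℤ))
    (by
      intro a b
      have hcast : ∀ i j : ZMod n, (((i + j).val : ℤ) : ZMod n)
          = (((i.val : ℤ) + (j.val : ℤ) : ℤ) : ZMod n) := by
        intro i j; push_cast; simp
      have hcast2 : ∀ i j : ZMod n, (((j - i).val : ℤ) : ZMod n)
          = (((j.val : ℤ) - (i.val : ℤ) : ℤ) : ZMod n) := by
        intro i j; push_cast; simp
      cases a with
      | r i => cases b with
        | r j =>
          show w ^ (((i + j).val : ℤ)) = w ^ (i.val : ℤ) * w ^ (j.val : ℤ)
          rw [← zpow_add]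
          exact zpow_eq_zpow_of_zmod'' hw (hcast i j)
        | sr j =>
          show s * w ^ (((j - i).val : ℤ)) = w ^ (i.val : ℤ) * (s * w ^ (j.val : ℤ))
          rw [← mul_assoc, hswap, mul_assoc, ← zpow_add]
          congr 1
          exact zpow_eq_zpow_of_zmod'' hw (by rw [hcast2]; push_cast; ring_nf)
      | sr i => cases b with
        | r j =>
          show s * w ^ (((i + j).val : ℤ)) = s * w ^ (i.val : ℤ) * w ^ (j.val : ℤ)
          rw [mul_assoc, ← zpow_add]
          congr 1
          exact zpow_eq_zpow_of_zmod'' hw (hcast i j)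
        | sr j =>
          show w ^ (((j - i).val : ℤ)) = s * w ^ (i.val : ℤ) * (s * w ^ (j.val : ℤ))
          rw [← mul_assoc (s * w ^ (i.val : ℤ)), hconj, ← zpow_add]
          exact zpow_eq_zpow_of_zmod'' hw (by rw [hcast2]; push_cast; ring_nf))

lemma dihedralHom_r (n : ℕ) [NeZero n] (w s : G) (hw : w ^ (n : ℤ) = 1) (hs : s * s = 1)
    (hrel : s * w * s = w⁻¹) (i : ZMod n) :
    dihedralHom n w s hw hs hrel (.r i) = w ^ (i.val : ℤ) := rfl

lemma dihedralHom_sr (n : ℕ) [NeZero n] (w s : G) (hw : w ^ (n : ℤ) = 1) (hs : s * s = 1)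
    (hrel : s * w * s = w⁻¹) (i : ZMod n) :
    dihedralHom n w s hw hs hrel (.sr i) = s * w ^ (i.val : ℤ) := rfl

end Cons

section Isos

variable {G : Type*} [Group G] [Finite G]

lemma zpow_order_cast {w : G} {n : ℕ} (hw : orderOf w = n) : w ^ (n : ℤ) = 1 := by
  rw [zpow_natCast, ← hw]
  exact pow_orderOf_eq_one w

lemma isoCyclic (n : ℕ) [NeZero n] (w : G) (hw : orderOf w = n)
    (hsur : ∀ g : G, ∃ k : ℤ, g = w ^ k) : Nonempty (G ≃* Multiplicative (ZMod n)) := by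
  have hwn := zpow_order_cast hw
  let φ := cyclicHom n w hwn
  have hinj : Function.Injective φ := by
    rw [injective_iff_map_eq_one]
    intro a ha
    have h1 : w ^ (((Multiplicative.toAdd a).val : ℤ)) = w ^ (0 : ℤ) := by
      rw [zpow_zero]; exact ha
    have h2 := zmod_of_zpow_eq hw h1
    rw [valCast] at h2
    have : Multiplicative.toAdd a = 0 := by simpa using h2
    have : a = Multiplicative.ofAdd 0 := by
      rw [← this]; rfl
    simpa using this
  have hsurj : Function.Surjective φ := by
    intro g
    obtain ⟨k, hk⟩ := hsur g
    refine ⟨Multiplicative.ofAdd ((k : ZMod n)), ?_⟩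
    show w ^ ((((k : ZMod n)).val : ℤ)) = g
    rw [hk]
    exact zpow_eq_zpow_of_zmod hw (valCast _)
  exact ⟨(MulEquiv.ofBijective φ ⟨hinj, hsurj⟩).symm⟩

lemma isoDihedral (n : ℕ) [NeZero n] (w s : G) (hw : orderOf w = n) (hs : s * s = 1)
    (hrel : s * w * s = w⁻¹) (hns : ∀ k : ℤ, s ≠ w ^ k)
    (hcov : ∀ g : G, (∃ k : ℤ, g = w ^ k) ∨ (∃ k : ℤ, g = s * w ^ k)) :
    Nonempty (G ≃* DihedralGroup n) := by
  have hwn := zpow_order_cast hw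
  let φ := dihedralHom n w s hwn hs hrel
  have hinj : Function.Injective φ := by
    rw [injective_iff_map_eq_one]
    intro d hd
    cases d with
    | r i =>
      have h1 : w ^ ((i.val : ℤ)) = w ^ (0 : ℤ) := by
        rw [zpow_zero]; exact hd
      have h2 := zmod_of_zpow_eq hw h1
      rw [valCast] at h2
      have : i = 0 := by simpa using h2
      rw [this]
      rfl
    | sr i =>
      have h1 : s = (w ^ ((i.val : ℤ)))⁻¹ := eq_inv_of_mul_eq_one_left hd
      rw [← zpow_neg] at h1
      exact absurd h1 (hns _)
  have hsurj : Function.Surjective φ := by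
    intro g
    rcases hcov g with ⟨k, hk⟩ | ⟨k, hk⟩
    · refine ⟨.r ((k : ZMod n)), ?_⟩
      show w ^ ((((k : ZMod n)).val : ℤ)) = g
      rw [hk]
      exact zpow_eq_zpow_of_zmod hw (valCast _)
    · refine ⟨.sr ((k : ZMod n)), ?_⟩
      show s * w ^ ((((k : ZMod n)).val : ℤ)) = g
      rw [hk]
      congr 1
      exact zpow_eq_zpow_of_zmod hw (valCast _)
  exact ⟨(MulEquiv.ofBijective φ ⟨hinj, hsurj⟩).symm⟩

lemma isoC4C2 (x t : G) (hx : orderOf x = 4) (ht2 : t * t = 1) (ht1 : t ≠ 1)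
    (hxt : x * t = t * x) (hnt : ∀ k : ℤ, t ≠ x ^ k)
    (hcov : ∀ g : G, ∃ i j : ℤ, g = x ^ i * t ^ j) :
    Nonempty (G ≃* Multiplicative (ZMod 4 × ZMod 2)) := by
  have ht : orderOf t = 2 := orderOf_eq_prime (by rw [pow_two]; exact ht2) ht1
  have hc1 : Commute x t := hxt
  have hxn := zpow_order_cast hx
  have htn := zpow_order_cast ht
  let φ : Multiplicative (ZMod 4 × ZMod 2) →* G := MonoidHom.mk'
    (fun p => x ^ (((Multiplicative.toAdd p).1.val : ℤ)) * t ^ (((Multiplicative.toAdd p).2.val : ℤ)))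
    (by
      intro a b
      show x ^ ((((Multiplicative.toAdd a).1 + (Multiplicative.toAdd b).1).val : ℤ))
          * t ^ ((((Multiplicative.toAdd a).2 + (Multiplicative.toAdd b).2).val : ℤ)) = _
      set a1 := (Multiplicative.toAdd a).1
      set a2 := (Multiplicative.toAdd a).2
      set b1 := (Multiplicative.toAdd b).1
      set b2 := (Multiplicative.toAdd b).2
      have h1 : x ^ (((a1 + b1).val : ℤ)) = x ^ ((a1.val : ℤ) + (b1.val : ℤ)) :=
        zpow_eq_zpow_of_zmod hx (by push_cast; simp)
      have h2 : t ^ (((a2 + b2).val : ℤ)) = t ^ ((a2.val : ℤ) + (b2.val : ℤ)) :=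
        zpow_eq_zpow_of_zmod ht (by push_cast; simp)
      rw [h1, h2, zpow_add, zpow_add]
      have hcomm : t ^ ((a2.val : ℤ)) * x ^ ((b1.val : ℤ))
          = x ^ ((b1.val : ℤ)) * t ^ ((a2.val : ℤ)) := ((hc1.zpow_zpow _ _).symm).eq
      calc x ^ (a1.val : ℤ) * x ^ (b1.val : ℤ) * (t ^ (a2.val : ℤ) * t ^ (b2.val : ℤ))
          = x ^ (a1.val : ℤ) * (x ^ (b1.val : ℤ) * t ^ (a2.val : ℤ)) * t ^ (b2.val : ℤ) := by
            rw [mul_assoc, mul_assoc, mul_assoc]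
        _ = x ^ (a1.val : ℤ) * (t ^ (a2.val : ℤ) * x ^ (b1.val : ℤ)) * t ^ (b2.val : ℤ) := by
            rw [hcomm]
        _ = x ^ (a1.val : ℤ) * t ^ (a2.val : ℤ) * (x ^ (b1.val : ℤ) * t ^ (b2.val : ℤ)) := by
            rw [mul_assoc, mul_assoc, mul_assoc])
  have hinj : Function.Injective φ := by
    rw [injective_iff_map_eq_one]
    intro p hp
    have hval2 : (Multiplicative.toAdd p).2.val < 2 := ZMod.val_lt _
    set a1 := (Multiplicative.toAdd p).1
    set a2 := (Multiplicative.toAdd p).2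
    have hp' : x ^ ((a1.val : ℤ)) * t ^ ((a2.val : ℤ)) = 1 := hp
    rcases (by omega : a2.val = 0 ∨ a2.val = 1) with h | h
    · rw [h] at hp'
      norm_num at hp'
      have h1 : x ^ ((a1.val : ℤ)) = x ^ (0 : ℤ) := by rw [zpow_zero]; exact hp'
      have h2 := zmod_of_zpow_eq hx h1
      rw [valCast] at h2
      have ha1 : a1 = 0 := by simpa using h2
      have ha2 : a2 = 0 := (ZMod.val_eq_zero a2).mp h
      have : Multiplicative.toAdd p = 0 := Prod.ext ha1 ha2
      have : p = Multiplicative.ofAdd 0 := by rw [← this]; rfl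
      simpa using this
    · rw [h] at hp'
      norm_num at hp'
      have h1 : t = (x ^ ((a1.val : ℤ)))⁻¹ := eq_inv_of_mul_eq_one_right hp'
      rw [← zpow_neg] at h1
      exact absurd h1 (hnt _)
  have hsurj : Function.Surjective φ := by
    intro g
    obtain ⟨i, j, hk⟩ := hcov g
    refine ⟨Multiplicative.ofAdd ((i : ZMod 4), (j : ZMod 2)), ?_⟩
    show x ^ ((((i : ZMod 4)).val : ℤ)) * t ^ ((((j : ZMod 2)).val : ℤ)) = g
    rw [hk, zpow_eq_zpow_of_zmod hx (valCast _), zpow_eq_zpow_of_zmod ht (valCast _)]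
  exact ⟨(MulEquiv.ofBijective φ ⟨hinj, hsurj⟩).symm⟩

lemma isoD8C2 (x t s : G) (hx : orderOf x = 4) (ht2 : t * t = 1) (ht1 : t ≠ 1)
    (hxt : x * t = t * x) (hst : s * t = t * s) (hs2 : s * s = 1) (hsx : s * x * s = x⁻¹)
    (hnt : ∀ k : ℤ, t ≠ x ^ k) (hns : ∀ i j : ℤ, s ≠ x ^ i * t ^ j)
    (hcov : ∀ g : G, (∃ i j : ℤ, g = x ^ i * t ^ j) ∨ (∃ i j : ℤ, g = s * x ^ i * t ^ j)) :
    Nonempty (G ≃* DihedralGroup 4 × Multiplicative (ZMod 2)) := by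
  have ht : orderOf t = 2 := orderOf_eq_prime (by rw [pow_two]; exact ht2) ht1
  have hc1 : Commute x t := hxt
  have hc2 : Commute s t := hst
  have hxn := zpow_order_cast hx
  have htn := zpow_order_cast ht
  let ψ := dihedralHom 4 x s hxn hs2 hsx
  let χ := cyclicHom 2 t htn
  have hcomm : ∀ (m : DihedralGroup 4) (u : Multiplicative (ZMod 2)), Commute (ψ m) (χ u) := by
    intro m u
    cases m with
    | r i => exact hc1.zpow_zpow _ _
    | sr i => exact Commute.mul_left (hc2.zpow_right _) (hc1.zpow_zpow _ _)
  let φ := ψ.noncommCoprod χ hcomm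
  have hinj : Function.Injective φ := by
    rw [injective_iff_map_eq_one]
    rintro ⟨d, u⟩ hp
    have hp' : ψ d * χ u = 1 := hp
    have hval2 : (Multiplicative.toAdd u).val < 2 := ZMod.val_lt _
    cases d with
    | r i =>
      have hp2 : x ^ ((i.val : ℤ)) * t ^ (((Multiplicative.toAdd u).val : ℤ)) = 1 := hp'
      rcases (by omega : (Multiplicative.toAdd u).val = 0 ∨ (Multiplicative.toAdd u).val = 1)
        with h | h
      · rw [h] at hp2
        norm_num at hp2
        have h1 : x ^ ((i.val : ℤ)) = x ^ (0 : ℤ) := by rw [zpow_zero]; exact hp2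
        have h2 := zmod_of_zpow_eq hx h1
        rw [valCast] at h2
        have hi : i = 0 := by simpa using h2
        have hu : u = 1 := by
          have h3 : Multiplicative.toAdd u = 0 := (ZMod.val_eq_zero _).mp h
          have : u = Multiplicative.ofAdd 0 := by rw [← h3]; rfl
          simpa using this
        rw [hi, hu]
        rfl
      · rw [h] at hp2
        norm_num at hp2
        have h1 : t = (x ^ ((i.val : ℤ)))⁻¹ := eq_inv_of_mul_eq_one_right hp2
        rw [← zpow_neg] at h1
        exact absurd h1 (hnt _)
    | sr i =>
      have hp2 : (s * x ^ ((i.val : ℤ))) * t ^ (((Multiplicative.toAdd u).val : ℤ)) = 1 := hp'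
      rw [mul_assoc] at hp2
      have h1 : s = (x ^ ((i.val : ℤ)) * t ^ (((Multiplicative.toAdd u).val : ℤ)))⁻¹ :=
        eq_inv_of_mul_eq_one_left hp2
      rw [mul_inv_rev, ← zpow_neg, ← zpow_neg, ((hc1.zpow_zpow _ _).symm).eq] at h1
      exact absurd h1 (hns _ _)
  have hsurj : Function.Surjective φ := by
    intro g
    rcases hcov g with ⟨i, j, hk⟩ | ⟨i, j, hk⟩
    · refine ⟨(.r ((i : ZMod 4)), Multiplicative.ofAdd ((j : ZMod 2))), ?_⟩
      show x ^ ((((i : ZMod 4)).val : ℤ)) * t ^ ((((j : ZMod 2)).val : ℤ)) = g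
      rw [hk, zpow_eq_zpow_of_zmod hx (valCast _), zpow_eq_zpow_of_zmod ht (valCast _)]
    · refine ⟨(.sr ((i : ZMod 4)), Multiplicative.ofAdd ((j : ZMod 2))), ?_⟩
      show (s * x ^ ((((i : ZMod 4)).val : ℤ))) * t ^ ((((j : ZMod 2)).val : ℤ)) = g
      rw [hk, zpow_eq_zpow_of_zmod hx (valCast _), zpow_eq_zpow_of_zmod ht (valCast _)]
  exact ⟨(MulEquiv.ofBijective φ ⟨hinj, hsurj⟩).symm⟩

end Isos




lemma card_cyclic_eq_zpowers_image {G : Type*} [Group G] [Fintype G]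
    [DecidableEq (Subgroup G)] :
    Nat.card {H : Subgroup G // IsCyclic H}
      = (Finset.univ.image (fun g : G => zpowers g)).card := by
  have hset : {H : Subgroup G | IsCyclic H}
      = ↑(Finset.univ.image (fun g : G => zpowers g)) := by
    ext H
    simp only [Set.mem_setOf_eq, Finset.coe_image, Set.mem_image, Finset.mem_coe,
      Finset.coe_univ, Set.mem_univ, true_and]
    constructor
    · intro hcy
      obtain ⟨g, hgen⟩ := hcy.exists_generator
      refine ⟨(g : G), ?_⟩
      ext z
      constructor
      · intro hz
        obtain ⟨k, hk⟩ := hz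
        rw [← hk]
        exact H.zpow_mem g.2 k
      · intro hz
        obtain ⟨k, hk⟩ := hgen ⟨z, hz⟩
        have : ((g : G)) ^ k = z := by
          have := congrArg (fun (u : H) => (u : G)) hk
          simpa using this
        exact ⟨k, this⟩
    · rintro ⟨g, rfl⟩
      exact _root_.isCyclic_zpowers g
  calc Nat.card {H : Subgroup G // IsCyclic H}
      = Nat.card (↑(Finset.univ.image (fun g : G => zpowers g)) : Set (Subgroup G)) :=
        Nat.card_congr (Equiv.subtypeEquivRight fun H => (Set.ext_iff.mp hset H))
    _ = (↑(Finset.univ.image (fun g : G => zpowers g)) : Set (Subgroup G)).ncard :=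
        Nat.card_coe_set_eq _
    _ = _ := Set.ncard_coe_finset _

lemma card_cyclic_congr {G K : Type*} [Group G] [Group K] (e : G ≃* K) :
    Nat.card {H : Subgroup G // IsCyclic H} = Nat.card {H : Subgroup K // IsCyclic H} := by
  apply Nat.card_congr
  have hmapmap : ∀ (H : Subgroup G), (H.map e.toMonoidHom).map e.symm.toMonoidHom = H := by
    intro H
    rw [Subgroup.map_map]
    have h1 : (e.symm.toMonoidHom.comp e.toMonoidHom) = MonoidHom.id G := by
      ext z; simp
    rw [h1, Subgroup.map_id]
  have hmapmap' : ∀ (H : Subgroup K), (H.map e.symm.toMonoidHom).map e.toMonoidHom = H := by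
    intro H
    rw [Subgroup.map_map]
    have h1 : (e.toMonoidHom.comp e.symm.toMonoidHom) = MonoidHom.id K := by
      ext z; simp
    rw [h1, Subgroup.map_id]
  refine ⟨fun p => ⟨p.1.map e.toMonoidHom, ?_⟩, fun p => ⟨p.1.map e.symm.toMonoidHom, ?_⟩,
    fun p => Subtype.ext (hmapmap p.1), fun p => Subtype.ext (hmapmap' p.1)⟩
  · haveI := p.2
    exact isCyclic_of_surjective (e.subgroupMap p.1).toMonoidHom (e.subgroupMap p.1).surjective
  · haveI := p.2
    exact isCyclic_of_surjective (e.symm.subgroupMap p.1).toMonoidHom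
      (e.symm.subgroupMap p.1).surjective

lemma card_cyclic_eq_image (K : Type*) [Group K] [Fintype K] [DecidableEq K] :
    Nat.card {H : Subgroup K // IsCyclic H}
      = (Finset.univ.image (fun g : K =>
          Finset.univ.filter (fun x : K => ∃ n ∈ Finset.range (Fintype.card K), g ^ n = x))).card := by
  classical
  rw [card_cyclic_eq_zpowers_image]
  have hiff : ∀ (g x : K), (∃ n ∈ Finset.range (Fintype.card K), g ^ n = x) ↔ x ∈ zpowers g := by
    intro g x
    constructor
    · rintro ⟨n, -, hn⟩
      exact ⟨(n : ℤ), by show g ^ ((n:ℕ):ℤ) = x; rw [zpow_natCast]; exact hn⟩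
    · intro hx
      have hx' : x ∈ Submonoid.powers g := mem_powers_iff_mem_zpowers.mpr hx
      obtain ⟨n, hn⟩ := hx'
      refine ⟨n % orderOf g, Finset.mem_range.mpr ?_, by rw [pow_mod_orderOf]; exact hn⟩
      have h1 : n % orderOf g < orderOf g := Nat.mod_lt _ (orderOf_pos g)
      exact lt_of_lt_of_le h1 orderOf_le_card_univ
  have himg : (Finset.univ.image (fun g : K =>
      Finset.univ.filter (fun x : K => ∃ n ∈ Finset.range (Fintype.card K), g ^ n = x)))
      = (Finset.univ.image (fun g : K => Finset.univ.filter (fun x : K => x ∈ zpowers g))) := by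
    apply Finset.image_congr
    intro g _
    apply Finset.filter_congr
    intro x _
    simp only [hiff g x]
  rw [himg]
  have himg2 : (Finset.univ.image (fun g : K => Finset.univ.filter (fun x : K => x ∈ zpowers g)))
      = (Finset.univ.image (fun g : K => zpowers g)).image
          (fun H : Subgroup K => Finset.univ.filter (fun x : K => x ∈ H)) := by
    rw [Finset.image_image]
    rfl
  have hinj : Function.Injective
      (fun H : Subgroup K => Finset.univ.filter (fun x : K => x ∈ H)) := by
    intro H1 H2 h
    ext z
    have := Finset.ext_iff.mp h z
    simpa using this
  rw [himg2, Finset.card_image_of_injective _ hinj]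

section P3X
variable {G : Type*} [Group G]

lemma count_structure [Finite G]
    (hc : Nat.card {H : Subgroup G // IsCyclic H} = Nat.card G - 2) :
    ∃ a b : G, (orderOf a = 3 ∨ orderOf a = 4 ∨ orderOf a = 6) ∧
      (orderOf b = 3 ∨ orderOf b = 4 ∨ orderOf b = 6) ∧ zpowers a ≠ zpowers b ∧
      (∀ g : G, orderOf g = 1 ∨ orderOf g = 2 ∨ orderOf g = 3 ∨ orderOf g = 4 ∨ orderOf g = 6) ∧
      (∀ g : G, (orderOf g = 3 ∨ orderOf g = 4 ∨ orderOf g = 6) →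
        zpowers g = zpowers a ∨ zpowers g = zpowers b) := by
  classical
  letI : Fintype G := Fintype.ofFinite G
  set S : Finset (Subgroup G) := Finset.univ.image (fun g : G => zpowers g) with hS
  have hset : {H : Subgroup G | IsCyclic H} = ↑S := by
    ext H
    simp only [Set.mem_setOf_eq, hS, Finset.coe_image, Set.mem_image, Finset.mem_coe,
      Finset.coe_univ, Set.mem_univ, true_and]
    constructor
    · intro hcy
      obtain ⟨g, hgen⟩ := hcy.exists_generator
      refine ⟨(g : G), ?_⟩
      ext z
      constructor
      · intro hz
        obtain ⟨k, hk⟩ := hz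
        rw [← hk]
        exact H.zpow_mem g.2 k
      · intro hz
        obtain ⟨k, hk⟩ := hgen ⟨z, hz⟩
        have : ((g : G)) ^ k = z := by
          have := congrArg (fun (u : H) => (u : G)) hk
          simpa using this
        exact ⟨k, this⟩
    · rintro ⟨g, rfl⟩
      exact _root_.isCyclic_zpowers g
  have hcard1 : Nat.card {H : Subgroup G // IsCyclic H} = S.card := by
    calc Nat.card {H : Subgroup G // IsCyclic H}
        = Nat.card (↑S : Set (Subgroup G)) :=
          Nat.card_congr (Equiv.subtypeEquivRight fun H => (Set.ext_iff.mp hset H))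
      _ = (↑S : Set (Subgroup G)).ncard := Nat.card_coe_set_eq _
      _ = S.card := Set.ncard_coe_finset S
  have hfiber : ∀ C ∈ S, (Finset.univ.filter (fun g : G => zpowers g = C)).card
      = Nat.totient (Nat.card C) := by
    intro C hC
    obtain ⟨g₀, -, hg₀⟩ := Finset.mem_image.mp hC
    have hcy : IsCyclic C := by rw [← hg₀]; exact _root_.isCyclic_zpowers g₀
    haveI := hcy
    have hmain := IsCyclic.card_orderOf_eq_totient (α := C) (d := Fintype.card C) dvd_rfl
    rw [Nat.card_eq_fintype_card, ← hmain]
    apply Finset.card_bij (fun (g : G) hg => (⟨g, by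
      have hgmem := (Finset.mem_filter.mp hg).2
      rw [← hgmem]; exact mem_zpowers g⟩ : C))
    · intro g hg
      have hgmem := (Finset.mem_filter.mp hg).2
      simp only [Finset.mem_filter, Finset.mem_univ, true_and]
      rw [← Subgroup.orderOf_coe]
      show orderOf g = _
      rw [← Nat.card_zpowers, hgmem, Nat.card_eq_fintype_card]
    · intro g1 h1 g2 h2 he
      exact congrArg (fun (u : C) => (u : G)) he
    · intro h hh
      have hord := (Finset.mem_filter.mp hh).2
      refine ⟨(h : G), ?_, rfl⟩
      simp only [Finset.mem_filter, Finset.mem_univ, true_and]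
      apply subgroup_eq_of_le_of_card_le (zpowers_le.mpr h.2)
      rw [Nat.card_zpowers, Subgroup.orderOf_coe, hord, Nat.card_eq_fintype_card]
  have hsum : ∑ C ∈ S, Nat.totient (Nat.card C) = Fintype.card G := by
    rw [← Finset.card_univ (α := G),
      Finset.card_eq_sum_card_image (fun g : G => zpowers g) Finset.univ, ← hS]
    exact Finset.sum_congr rfl (fun C hC => (hfiber C hC).symm)
  have hφpos : ∀ C ∈ S, 1 ≤ Nat.totient (Nat.card C) := fun C hC =>
    Nat.totient_pos.mpr Nat.card_pos
  have hS1 : 1 ≤ S.card := Finset.card_pos.mpr (Finset.univ_nonempty.image _)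
  have hSle : S.card ≤ Fintype.card G := by
    rw [← hsum]
    calc S.card = ∑ _C ∈ S, 1 := by rw [Finset.sum_const, smul_eq_mul, mul_one]
      _ ≤ _ := Finset.sum_le_sum hφpos
  have hc' : S.card = Fintype.card G - 2 := by
    rw [← hcard1, hc, Nat.card_eq_fintype_card]
  have hkey : ∑ C ∈ S, (Nat.totient (Nat.card C) - 1) = 2 := by
    have h1 : ∑ C ∈ S, (Nat.totient (Nat.card C) - 1) + S.card = Fintype.card G := by
      rw [Finset.card_eq_sum_ones, ← Finset.sum_add_distrib, ← hsum]
      exact Finset.sum_congr rfl (fun C hC => by have := hφpos C hC; omega)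
    omega
  have hφle : ∀ C ∈ S, Nat.totient (Nat.card C) ≤ 2 := by
    intro C hC
    have h3 := totient_ne_three (Nat.card C)
    have h4 : Nat.totient (Nat.card C) - 1 ≤ 2 := by
      rw [← hkey]
      exact Finset.single_le_sum (f := fun (C : Subgroup G) => Nat.totient (Nat.card ↥C) - 1)
        (fun i _ => Nat.zero_le _) hC
    have := hφpos C hC
    omega
  have hordφ : ∀ g : G, Nat.totient (orderOf g) ≤ 2 := by
    intro g
    have hmem : zpowers g ∈ S := Finset.mem_image_of_mem _ (Finset.mem_univ g)
    have := hφle _ hmem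
    rwa [Nat.card_zpowers] at this
  have horders : ∀ g : G, orderOf g = 1 ∨ orderOf g = 2 ∨ orderOf g = 3 ∨ orderOf g = 4
      ∨ orderOf g = 6 := by
    intro g
    apply totient_le_two_cases (orderOf_pos g).ne'
    intro d hd
    have h1 := Nat.totient_dvd_of_dvd hd
    have h2 := hordφ g
    have h3 : 0 < Nat.totient (orderOf g) := Nat.totient_pos.mpr (orderOf_pos g)
    exact le_trans (Nat.le_of_dvd h3 h1) h2
  have hcases : ∀ C ∈ S, Nat.card C = 1 ∨ Nat.card C = 2 ∨ Nat.card C = 3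
      ∨ Nat.card C = 4 ∨ Nat.card C = 6 := by
    intro C hC
    obtain ⟨g₀, -, hg₀⟩ := Finset.mem_image.mp hC
    rw [← hg₀, Nat.card_zpowers]
    exact horders g₀
  set T : Finset (Subgroup G) :=
    S.filter (fun C => Nat.card C = 3 ∨ Nat.card C = 4 ∨ Nat.card C = 6) with hT
  have hTcard : T.card = 2 := by
    have e1 : ∑ C ∈ T, (Nat.totient (Nat.card C) - 1)
        = ∑ C ∈ S, (Nat.totient (Nat.card C) - 1) := by
      apply Finset.sum_filter_of_ne
      intro C hC hne
      rcases hcases C hC with h | h | h | h | h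
      · rw [h] at hne; exact absurd (by decide) hne
      · rw [h] at hne; exact absurd (by decide) hne
      · exact Or.inl h
      · exact Or.inr (Or.inl h)
      · exact Or.inr (Or.inr h)
    have e2 : ∑ C ∈ T, (Nat.totient (Nat.card C) - 1) = ∑ _C ∈ T, 1 := by
      apply Finset.sum_congr rfl
      intro C hCT
      have hpred := (Finset.mem_filter.mp hCT).2
      rcases hpred with h | h | h <;> rw [h] <;> decide
    have e3 : ∑ _C ∈ T, 1 = T.card := by rw [Finset.sum_const, smul_eq_mul, mul_one]
    omega
  obtain ⟨A, B, hABne, hTeq⟩ := Finset.card_eq_two.mp hTcard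
  have hAT : A ∈ T := by rw [hTeq]; exact Finset.mem_insert_self _ _
  have hBT : B ∈ T := by rw [hTeq]; simp
  obtain ⟨hAS, hAcard⟩ := Finset.mem_filter.mp hAT
  obtain ⟨hBS, hBcard⟩ := Finset.mem_filter.mp hBT
  obtain ⟨a, -, ha⟩ := Finset.mem_image.mp hAS
  obtain ⟨b, -, hb⟩ := Finset.mem_image.mp hBS
  have haord : orderOf a = 3 ∨ orderOf a = 4 ∨ orderOf a = 6 := by
    rw [← Nat.card_zpowers, ha]; exact hAcard
  have hbord : orderOf b = 3 ∨ orderOf b = 4 ∨ orderOf b = 6 := by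
    rw [← Nat.card_zpowers, hb]; exact hBcard
  refine ⟨a, b, haord, hbord, by rw [ha, hb]; exact hABne, horders, ?_⟩
  intro g hg
  have hmemT : zpowers g ∈ T := by
    rw [hT]
    refine Finset.mem_filter.mpr ⟨Finset.mem_image_of_mem _ (Finset.mem_univ g), ?_⟩
    rw [Nat.card_zpowers]
    exact hg
  rw [hTeq] at hmemT
  rw [ha, hb]
  rcases Finset.mem_insert.mp hmemT with h | h
  · left; exact h
  · right; exact Finset.mem_singleton.mp h
end P3X

section P4X
variable {G : Type*} [Group G] [Finite G]

lemma orderOf_eq_of_zpowers_eq {a b : G} (h : zpowers a = zpowers b) :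
    orderOf a = orderOf b := by
  rw [← Nat.card_zpowers, ← Nat.card_zpowers, h]

lemma mem_of_zpowers_eq {a b : G} (h : zpowers a = zpowers b) : a ∈ zpowers b :=
  h ▸ mem_zpowers a

lemma orderOf_conj' (u g : G) : orderOf (u * g * u⁻¹) = orderOf g := by
  have := orderOf_injective (MulAut.conj u).toMonoidHom (MulEquiv.injective _) g
  simpa using this

lemma zpowers_eq_zpowers_of_mem {a b : G} (h : a ∈ zpowers b) (ho : orderOf a = orderOf b) :
    zpowers a = zpowers b := zpowers_eq_of_mem h ho.ge

lemma pow3_eq_one {a : G} (ha : orderOf a = 3) : a * a * a = 1 := by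
  have h := pow_orderOf_eq_one a
  rw [ha, show (3:ℕ) = 2 + 1 from rfl, pow_succ, pow_two] at h
  exact h

/-- two distinct cyclic subgroups of order 3 are impossible -/
lemma case33 {a b : G} (ha : orderOf a = 3) (hb : orderOf b = 3)
    (hne : zpowers a ≠ zpowers b)
    (h2 : ∀ g : G, orderOf g = 3 → zpowers g = zpowers a ∨ zpowers g = zpowers b) :
    False := by
  have ha1 : a ≠ 1 := by intro h; rw [h, orderOf_one] at ha; omega
  have hbZa : b ∉ zpowers a := by
    intro h
    exact hne (zpowers_eq_zpowers_of_mem h (by omega)).symm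
  have haZb : a ∉ zpowers b := by
    intro h
    exact hne (zpowers_eq_zpowers_of_mem h (by omega))
  have ha3 : a ^ (3:ℕ) = 1 := by rw [← ha]; exact pow_orderOf_eq_one a
  have hb3 : b ^ (3:ℕ) = 1 := by rw [← hb]; exact pow_orderOf_eq_one b
  have hoc : orderOf (b * a * b⁻¹) = 3 := by rw [orderOf_conj', ha]
  have hcommFalse : a * b = b * a → False := by
    intro hcomm
    have hcab : Commute a b := hcomm
    have hd3 : (a * b) ^ (3 : ℕ) = 1 := by
      rw [hcab.mul_pow, ha3, hb3, one_mul]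
    have hd1 : a * b ≠ 1 := by
      intro h
      have hbinv : b = a⁻¹ := eq_inv_of_mul_eq_one_right h
      exact hbZa (hbinv ▸ inv_mem (mem_zpowers a))
    have hod : orderOf (a * b) = 3 := by
      have hdvd := orderOf_dvd_of_pow_eq_one hd3
      rcases (Nat.prime_three).eq_one_or_self_of_dvd _ hdvd with h | h
      · exact absurd (orderOf_eq_one_iff.mp h) hd1
      · exact h
    rcases h2 (a * b) hod with h | h
    · refine hbZa ?_
      have hdin := mem_of_zpowers_eq h
      have hbe : b = a⁻¹ * (a * b) := by group
      rw [hbe]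
      exact mul_mem (inv_mem (mem_zpowers a)) hdin
    · refine haZb ?_
      have hdin := mem_of_zpowers_eq h
      have hae : a = (a * b) * b⁻¹ := by group
      rw [hae]
      exact mul_mem hdin (inv_mem (mem_zpowers b))
  rcases h2 (b * a * b⁻¹) hoc with h | h
  · obtain ⟨k, hk3, hkeq⟩ := mem_zpowers_elim (mem_of_zpowers_eq h)
    rw [ha] at hk3
    interval_cases k
    · have : (1 : G) = b * a * b⁻¹ := by rw [← hkeq]; norm_num
      rw [← this] at hoc
      simp at hoc
    · have hca : a = b * a * b⁻¹ := by rw [← hkeq]; norm_num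
      apply hcommFalse
      have : a * b = b * a * b⁻¹ * b := by rw [← hca]
      simpa [mul_assoc] using this
    · have hkeq2 : b * a * b⁻¹ = a * a := by
        rw [← hkeq]
        rw [show ((2:ℕ):ℤ) = (2:ℤ) from rfl]
        rw [show (2:ℤ) = ((2:ℕ):ℤ) from rfl, zpow_natCast, pow_two]
      have f1 : b * (a * a) * b⁻¹ = a := by
        have e1 : b * (a * a) * b⁻¹ = (b * a * b⁻¹) * (b * a * b⁻¹) := by group
        rw [e1, hkeq2]
        calc a * a * (a * a) = (a * a * a) * a := by group
          _ = a := by rw [pow3_eq_one ha, one_mul]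
      have g1 : b * (b * a * b⁻¹) * b⁻¹ = a := by rw [hkeq2]; exact f1
      have g2 : (b * b * b) * a * (b * b * b)⁻¹ = a * a := by
        calc (b*b*b) * a * (b*b*b)⁻¹ = b * (b * (b * a * b⁻¹) * b⁻¹) * b⁻¹ := by group
          _ = b * a * b⁻¹ := by rw [g1]
          _ = a * a := hkeq2
      have g3 : a = a * a := by
        rw [pow3_eq_one hb] at g2
        simpa using g2.symm
      exact ha1 (left_eq_mul.mp g3)
  · obtain ⟨k, hk3, hkeq⟩ := mem_zpowers_elim (mem_of_zpowers_eq h)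
    have hae : a = b ^ (k:ℤ) := by
      have h1 : b⁻¹ * (b * a * b⁻¹) * b = a := by group
      rw [← h1, ← hkeq]
      group
    exact haZb (hae ▸ zpow_mem (mem_zpowers b) k)
end P4X

section Y
variable {G : Type*} [Group G] [Finite G]

lemma pow2_eq_one {a : G} (ha : orderOf a = 2) : a * a = 1 := by
  have h := pow_orderOf_eq_one a
  rw [ha, pow_two] at h
  exact h

/-- cyclic subgroups of orders 3 and 4 are impossible -/
lemma case34 {a b : G} (ha : orderOf a = 3) (hb : orderOf b = 4)
    (h1 : ∀ g : G, orderOf g = 1 ∨ orderOf g = 2 ∨ orderOf g = 3 ∨ orderOf g = 4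
      ∨ orderOf g = 6)
    (h2 : ∀ g : G, (orderOf g = 3 ∨ orderOf g = 4 ∨ orderOf g = 6) →
      zpowers g = zpowers a ∨ zpowers g = zpowers b) : False := by
  have hoc : orderOf (b * a * b⁻¹) = 3 := by rw [orderOf_conj', ha]
  have hcommFalse : ∀ u : G, orderOf u = 2 → u * a = a * u → False := by
    intro u hu hcomm
    have hcab : Commute a u := hcomm.symm
    have ho6 : orderOf (a * u) = 6 :=  by
      rw [hcab.orderOf_mul_eq_mul_orderOf_of_coprime (by rw [ha, hu]; decide), ha, hu]
    rcases h2 (a * u) (Or.inr (Or.inr ho6)) with h | h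
    · have := orderOf_eq_of_zpowers_eq h
      rw [ho6, ha] at this; omega
    · have := orderOf_eq_of_zpowers_eq h
      rw [ho6, hb] at this; omega
  rcases h2 (b * a * b⁻¹) (Or.inl hoc) with h | h
  · obtain ⟨k, hk3, hkeq⟩ := mem_zpowers_elim (mem_of_zpowers_eq h)
    rw [ha] at hk3
    interval_cases k
    · have : (1 : G) = b * a * b⁻¹ := by rw [← hkeq]; norm_num
      rw [← this] at hoc
      simp at hoc
    · -- commute with b: order 12 element
      have hca : a = b * a * b⁻¹ := by rw [← hkeq]; norm_num
      have hcomm : a * b = b * a := by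
        have : a * b = b * a * b⁻¹ * b := by rw [← hca]
        simpa [mul_assoc] using this
      have hcab : Commute a b := hcomm
      have ho12 : orderOf (a * b) = 12 := by
        rw [hcab.orderOf_mul_eq_mul_orderOf_of_coprime (by rw [ha, hb]; decide), ha, hb]
      rcases h1 (a * b) with h | h | h | h | h <;> omega
    · -- b a b⁻¹ = a², so b² commutes with a
      have hkeq2 : b * a * b⁻¹ = a * a := by
        rw [← hkeq, show ((2:ℕ):ℤ) = ((2:ℕ):ℤ) from rfl, zpow_natCast, pow_two]
      have f1 : (b * b) * a * (b * b)⁻¹ = a := by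
        calc (b*b) * a * (b*b)⁻¹ = b * (b * a * b⁻¹) * b⁻¹ := by group
          _ = b * (a * a) * b⁻¹ := by rw [hkeq2]
          _ = (b * a * b⁻¹) * (b * a * b⁻¹) := by group
          _ = (a * a) * (a * a) := by rw [hkeq2]
          _ = (a * a * a) * a := by group
          _ = a := by rw [pow3_eq_one ha, one_mul]
      have hob2 : orderOf (b * b) = 2 := by
        rw [← pow_two, orderOf_pow, hb]; decide
      have hcomm : (b * b) * a = a * (b * b) := by
        have : (b*b) * a = (b*b) * a * (b*b)⁻¹ * (b*b) := by group
        rw [this, f1]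
      exact hcommFalse (b * b) hob2 hcomm
  · have := orderOf_eq_of_zpowers_eq h
    rw [hoc, hb] at this; omega

end Y

section Z
variable {G : Type*} [Group G] [Finite G]


lemma case36 {a w : G} (ha : orderOf a = 3) (hw : orderOf w = 6)
    (h1 : ∀ g : G, orderOf g = 1 ∨ orderOf g = 2 ∨ orderOf g = 3 ∨ orderOf g = 4
      ∨ orderOf g = 6)
    (h2 : ∀ g : G, (orderOf g = 3 ∨ orderOf g = 4 ∨ orderOf g = 6) →
      zpowers g = zpowers a ∨ zpowers g = zpowers w) :
    Nonempty (G ≃* Multiplicative (ZMod 6)) ∨ Nonempty (G ≃* DihedralGroup 6) := by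
  have hw2mem : w * w ∈ zpowers w := mul_mem (mem_zpowers w) (mem_zpowers w)
  have how2 : orderOf (w * w) = 3 := by
    rw [← pow_two, orderOf_pow, hw]; decide
  have hZa : zpowers a = zpowers (w * w) := by
    rcases h2 (w * w) (Or.inl how2) with h | h
    · exact h.symm
    · have := orderOf_eq_of_zpowers_eq h
      rw [how2, hw] at this; omega
  have hww2 : w * w = w ^ (2:ℤ) := by
    rw [show (2:ℤ) = ((2:ℕ):ℤ) from rfl, zpow_natCast, pow_two]
  have haw : a ∈ zpowers w := by
    have hmem : a ∈ zpowers (w * w) := mem_of_zpowers_eq hZa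
    obtain ⟨k, hk⟩ := hmem
    have hk' : (w * w) ^ k = a := hk
    refine ⟨2 * k, ?_⟩
    show w ^ (2 * k) = a
    rw [← hk', hww2, ← zpow_mul]
  have hout : ∀ g : G, g ∉ zpowers w → orderOf g = 2 := by
    intro g hg
    rcases h1 g with h | h | h | h | h
    · exact absurd (orderOf_eq_one_iff.mp h ▸ one_mem _) hg
    · exact h
    · exfalso
      rcases h2 g (Or.inl h) with hh | hh
      · rw [hZa] at hh
        have hmem := mem_of_zpowers_eq hh
        obtain ⟨k, hk⟩ := hmem
        exact hg (hk ▸ zpow_mem hw2mem k)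
      · exact hg (mem_of_zpowers_eq hh)
    · exfalso
      rcases h2 g (Or.inr (Or.inl h)) with hh | hh
      · have := orderOf_eq_of_zpowers_eq hh; rw [h, ha] at this; omega
      · have := orderOf_eq_of_zpowers_eq hh; rw [h, hw] at this; omega
    · exfalso
      rcases h2 g (Or.inr (Or.inr h)) with hh | hh
      · have := orderOf_eq_of_zpowers_eq hh; rw [h, ha] at this; omega
      · exact hg (mem_of_zpowers_eq hh)
  by_cases hall : ∀ g : G, g ∈ zpowers w
  · left
    apply isoCyclic 6 w hw
    intro g
    obtain ⟨k, hk⟩ := hall g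
    exact ⟨k, hk.symm⟩
  · right
    push_neg at hall
    obtain ⟨s, hs⟩ := hall
    have hos : orderOf s = 2 := hout s hs
    have hs2 : s * s = 1 := pow2_eq_one hos
    -- any element outside ⟨w⟩ inverts w*w
    have hstep : ∀ u : G, u ∉ zpowers w → (w * w) * u ≠ u * (w * w) := by
      intro u hu hcomm
      have hou : orderOf u = 2 := hout u hu
      have hcab : Commute (w * w) u := hcomm
      have ho6 : orderOf ((w * w) * u) = 6 := by
        rw [hcab.orderOf_mul_eq_mul_orderOf_of_coprime (by rw [how2, hou]; decide),
          how2, hou]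
      rcases h2 ((w * w) * u) (Or.inr (Or.inr ho6)) with hh | hh
      · have := orderOf_eq_of_zpowers_eq hh; rw [ho6, ha] at this; omega
      · have hmem := mem_of_zpowers_eq hh
        have : u = (w * w)⁻¹ * ((w * w) * u) := by group
        exact hu (this ▸ mul_mem (inv_mem hw2mem) hmem)
    have hinv3 : ∀ u : G, u ∉ zpowers w → u * (w * w) * u⁻¹ = (w * w) * (w * w) := by
      intro u hu
      have hoc : orderOf (u * (w * w) * u⁻¹) = 3 := by rw [orderOf_conj', how2]
      have hcZ : zpowers (u * (w * w) * u⁻¹) = zpowers (w * w) := by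
        rcases h2 _ (Or.inl hoc) with hh | hh
        · rw [hh, hZa]
        · exfalso
          have := orderOf_eq_of_zpowers_eq hh; rw [hoc, hw] at this; omega
      obtain ⟨k, hk3, hkeq⟩ := mem_zpowers_elim (mem_of_zpowers_eq hcZ)
      rw [how2] at hk3
      interval_cases k
      · exfalso
        have : (1 : G) = u * (w * w) * u⁻¹ := by rw [← hkeq]; norm_num
        rw [← this] at hoc
        simp at hoc
      · exfalso
        have hca : w * w = u * (w * w) * u⁻¹ := by rw [← hkeq]; norm_num
        apply hstep u hu
        have : (w * w) * u = u * (w * w) * u⁻¹ * u := by rw [← hca]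
        simpa [mul_assoc] using this
      · rw [← hkeq, show ((2:ℕ):ℤ) = ((2:ℕ):ℤ) from rfl, zpow_natCast, pow_two]
    have hrel : s * w * s = w⁻¹ := by
      have hq : s * w ∉ zpowers w := by
        intro hq
        have : s = (s * w) * w⁻¹ := by group
        exact hs (this ▸ mul_mem hq (inv_mem (mem_zpowers w)))
      have := pow2_eq_one (hout _ hq)
      have h1' : s * w * s * w = 1 := by
        calc s * w * s * w = (s * w) * (s * w) := by group
          _ = 1 := this
      exact eq_inv_of_mul_eq_one_left h1'
    have hcov : ∀ g : G, g ∉ zpowers w → s * g ∈ zpowers w := by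
      intro g hg
      by_contra hq
      have hsg1 : (s * g) * (s * g) = 1 := pow2_eq_one (hout _ hq)
      have hg2 : g * g = 1 := pow2_eq_one (hout g hg)
      have hinvs := hinv3 s hs
      have hinvg := hinv3 g hg
      -- s*g commutes with w*w
      apply hstep (s * g) hq
      have hsinv : s⁻¹ = s := inv_eq_of_mul_eq_one_right hs2
      have hginv : g⁻¹ = g := inv_eq_of_mul_eq_one_right hg2
      have e1 : (s * g) * (w * w) * (s * g)⁻¹ = s * (g * (w * w) * g⁻¹) * s⁻¹ := by
        group
      rw [hinvg] at e1
      have e2 : s * ((w * w) * (w * w)) * s⁻¹ = (s * (w * w) * s⁻¹) * (s * (w * w) * s⁻¹) := by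
        group
      have e4 : (s * g) * (w * w) * (s * g)⁻¹ = w * w := by
        rw [e1, e2, hinvs]
        have h3 := pow3_eq_one how2
        calc (w*w)*(w*w) * ((w*w)*(w*w)) = ((w*w)*(w*w)*(w*w)) * (w*w) := by group
          _ = w * w := by rw [h3, one_mul]
      calc (w * w) * (s * g) = ((s * g) * (w * w) * (s * g)⁻¹) * (s * g) := by rw [e4]
        _ = (s * g) * (w * w) := by group
    apply isoDihedral 6 w s hw hs2 hrel
    · intro k hk
      exact hs (hk ▸ zpow_mem (mem_zpowers w) k)
    · intro g
      by_cases hg : g ∈ zpowers w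
      · obtain ⟨k, hk⟩ := hg
        exact Or.inl ⟨k, hk.symm⟩
      · obtain ⟨k, hk⟩ := hcov g hg
        have hk' : w ^ k = s * g := hk
        right
        refine ⟨k, ?_⟩
        calc g = s * (s * g) := by rw [← mul_assoc, hs2, one_mul]
          _ = s * w ^ k := by rw [hk']
end Z

section W
variable {G : Type*} [Group G] [Finite G]


lemma case44 {x y : G} (hx : orderOf x = 4) (hy : orderOf y = 4)
    (hne : zpowers x ≠ zpowers y)
    (h1 : ∀ g : G, orderOf g = 1 ∨ orderOf g = 2 ∨ orderOf g = 3 ∨ orderOf g = 4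
      ∨ orderOf g = 6)
    (h2 : ∀ g : G, (orderOf g = 3 ∨ orderOf g = 4 ∨ orderOf g = 6) →
      zpowers g = zpowers x ∨ zpowers g = zpowers y) :
    Nonempty (G ≃* Multiplicative (ZMod 4 × ZMod 2)) ∨
      Nonempty (G ≃* DihedralGroup 4 × Multiplicative (ZMod 2)) := by
  have hx2ne1 : x * x ≠ 1 := by
    intro h
    have : orderOf x ∣ 2 := orderOf_dvd_of_pow_eq_one (by rw [pow_two]; exact h)
    rw [hx] at this
    norm_num at this
  have hx4 : x ^ (4:ℕ) = 1 := by rw [← hx]; exact pow_orderOf_eq_one x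
  have hy4 : y ^ (4:ℕ) = 1 := by rw [← hy]; exact pow_orderOf_eq_one y
  have hfour : ∀ g : G, g * g * (g * g) = g ^ (4:ℕ) := fun g => by
    rw [← pow_two, ← pow_two, ← pow_mul]
  have hyZx : y ∉ zpowers x := fun h => hne (zpowers_eq_zpowers_of_mem h (by omega)).symm
  have hxZy : x ∉ zpowers y := fun h => hne (zpowers_eq_zpowers_of_mem h (by omega))
  have horder124 : ∀ g : G, orderOf g = 1 ∨ orderOf g = 2 ∨ orderOf g = 4 := by
    intro g
    rcases h1 g with h | h | h | h | h
    · exact Or.inl h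
    · exact Or.inr (Or.inl h)
    · exfalso
      rcases h2 g (Or.inl h) with hh | hh <;>
        [have := orderOf_eq_of_zpowers_eq hh; have := orderOf_eq_of_zpowers_eq hh] <;>
        simp_all
    · exact Or.inr (Or.inr h)
    · exfalso
      rcases h2 g (Or.inr (Or.inr h)) with hh | hh <;>
        [have := orderOf_eq_of_zpowers_eq hh; have := orderOf_eq_of_zpowers_eq hh] <;>
        simp_all
  have hto4 : ∀ g : G, g * g ≠ 1 → (g * g) * (g * g) = 1 → orderOf g = 4 := by
    intro g hg2 hg4
    rcases horder124 g with h | h | h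
    · exact absurd (by rw [orderOf_eq_one_iff.mp h]; group) hg2
    · exact absurd (pow2_eq_one h) hg2
    · exact h
  -- x y x⁻¹ ∈ <y>, and equals y (commuting) after excluding cases
  have hcomm : x * y = y * x := by
    have hoc : orderOf (x * y * x⁻¹) = 4 := by rw [orderOf_conj', hy]
    have hcZy : zpowers (x * y * x⁻¹) = zpowers y := by
      rcases h2 _ (Or.inr (Or.inl hoc)) with hh | hh
      · exfalso
        obtain ⟨k, hk4, hkeq⟩ := mem_zpowers_elim (mem_of_zpowers_eq hh)
        have hyx : y = x⁻¹ * (x ^ (k:ℤ)) * x := by rw [hkeq]; group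
        have : y ∈ zpowers x := by
          rw [hyx]
          have : x⁻¹ * x ^ (k:ℤ) * x = x ^ (k:ℤ) := by group
          rw [this]
          exact zpow_mem (mem_zpowers x) k
        exact hyZx this
      · exact hh
    obtain ⟨k, hk4, hkeq⟩ := mem_zpowers_elim (mem_of_zpowers_eq hcZy)
    rw [hy] at hk4
    interval_cases k
    · exfalso
      have : (1 : G) = x * y * x⁻¹ := by rw [← hkeq]; norm_num
      rw [← this] at hoc
      simp at hoc
    · have hca : y = x * y * x⁻¹ := by rw [← hkeq]; norm_num
      have : y * x = x * y * x⁻¹ * x := by rw [← hca]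
      simpa [mul_assoc] using this.symm
    · exfalso
      have hk2 : y ^ ((2:ℕ):ℤ) = x * y * x⁻¹ := hkeq
      have : orderOf (y ^ (2:ℕ)) = 2 := by rw [orderOf_pow, hy]; decide
      rw [show y ^ ((2:ℕ):ℤ) = y ^ (2:ℕ) from zpow_natCast y 2] at hk2
      rw [hk2, hoc] at this
      omega
    · -- x y x⁻¹ = y³ = y⁻¹ : Q8-like, contradiction via x*y
      exfalso
      have hk3 : y ^ ((3:ℕ):ℤ) = x * y * x⁻¹ := hkeq
      have hyinv : y ^ ((3:ℕ):ℤ) = y⁻¹ := by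
        rw [zpow_natCast]
        have h31 : y ^ (3:ℕ) * y = 1 := by rw [← pow_succ]; exact hy4
        exact eq_inv_of_mul_eq_one_left h31
      have hconj : x * y * x⁻¹ = y⁻¹ := by rw [← hk3, hyinv]
      have hyx : y * x = x * y⁻¹ := by
        have h1' : x * y⁻¹ * x⁻¹ = y := by
          have hcc := congrArg (fun z : G => z⁻¹) hconj
          simpa [mul_inv_rev, mul_assoc] using hcc
        calc y * x = (x * y⁻¹ * x⁻¹) * x := by rw [h1']
          _ = x * y⁻¹ := by group
      have hd2 : (x * y) * (x * y) = x * x := by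
        calc (x*y)*(x*y) = x * (y * x) * y := by group
          _ = x * (x * y⁻¹) * y := by rw [hyx]
          _ = x * x := by group
      have hd4 : ((x*y)*(x*y)) * ((x*y)*(x*y)) = 1 := by
        rw [hd2, hfour x, hx4]
      have hod : orderOf (x * y) = 4 := hto4 _ (by rw [hd2]; exact hx2ne1) hd4
      rcases h2 (x * y) (Or.inr (Or.inl hod)) with hh | hh
      · have hmem := mem_of_zpowers_eq hh
        have : y = x⁻¹ * (x * y) := by group
        exact hyZx (this ▸ mul_mem (inv_mem (mem_zpowers x)) hmem)
      · have hmem := mem_of_zpowers_eq hh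
        have : x = (x * y) * y⁻¹ := by group
        exact hxZy (this ▸ mul_mem hmem (inv_mem (mem_zpowers y)))
  have hcxy : Commute x y := hcomm
  -- x² = y²
  have hsq : x * x = y * y := by
    by_contra hne2
    have hot : orderOf (y * y) = 2 := by
      rw [← pow_two, orderOf_pow, hy]; decide
    have htne1 : y * y ≠ 1 := by
      intro h
      rw [← pow_two] at h
      have hdd := orderOf_dvd_of_pow_eq_one h
      rw [hy] at hdd
      norm_num at hdd
    have htx : Commute (y * y) x := ((hcxy.symm).mul_left (hcxy.symm))
    have hu2 : ((y*y)*x) * ((y*y)*x) = x * x := by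
      calc ((y*y)*x) * ((y*y)*x) = (y*y) * (x * (y*y)) * x := by group
        _ = (y*y) * ((y*y) * x) * x := by rw [(htx.symm).eq]
        _ = ((y*y)*(y*y)) * (x * x) := by group
        _ = x * x := by rw [hfour y, hy4, one_mul]
    have hu4 : (((y*y)*x) * ((y*y)*x)) * (((y*y)*x) * ((y*y)*x)) = 1 := by
      rw [hu2, hfour x, hx4]
    have hou : orderOf ((y*y)*x) = 4 := hto4 _ (by rw [hu2]; exact hx2ne1) hu4
    rcases h2 _ (Or.inr (Or.inl hou)) with hh | hh
    · have hmem := mem_of_zpowers_eq hh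
      -- y*y = u * x⁻¹ ∈ <x>; then y*y = x^k with order 2 forces y*y = x*x
      have hyyZx : y * y ∈ zpowers x := by
        have : y * y = ((y*y)*x) * x⁻¹ := by group
        exact this ▸ mul_mem hmem (inv_mem (mem_zpowers x))
      obtain ⟨k, hk4, hkeq⟩ := mem_zpowers_elim hyyZx
      rw [hx] at hk4
      interval_cases k
      · exact htne1 (by rw [← hkeq]; norm_num)
      · have : y * y = x := by rw [← hkeq]; norm_num
        rw [← this, hot] at hx
        omega
      · apply hne2
        have : x ^ ((2:ℕ):ℤ) = x * x := by rw [zpow_natCast, pow_two]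
        rw [this] at hkeq
        rw [hkeq]
      · have : orderOf (x ^ (3:ℕ)) = 4 := by rw [orderOf_pow, hx]; decide
        rw [show x ^ ((3:ℕ):ℤ) = x ^ (3:ℕ) from zpow_natCast x 3] at hkeq
        rw [hkeq, hot] at this
        omega
    · have hmem := mem_of_zpowers_eq hh
      have : x = (y*y)⁻¹ * ((y*y)*x) := by group
      have hxmem : x ∈ zpowers y := by
        rw [this]
        exact mul_mem (inv_mem (mul_mem (mem_zpowers y) (mem_zpowers y))) hmem
      exact hxZy hxmem
  -- t := x * y⁻¹ is an involution outside <x>, commuting with x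
  have hxyinv : Commute x y⁻¹ := hcxy.inv_right
  have ht2 : (x * y⁻¹) * (x * y⁻¹) = 1 := by
    calc (x*y⁻¹)*(x*y⁻¹) = x * (y⁻¹ * x) * y⁻¹ := by group
      _ = x * (x * y⁻¹) * y⁻¹ := by rw [(hxyinv.symm).eq]
      _ = (x*x) * (y*y)⁻¹ := by group
      _ = 1 := by rw [hsq]; group
  have ht1 : x * y⁻¹ ≠ 1 := by
    intro h
    have : x = y := by
      have := eq_inv_of_mul_eq_one_left h
      rw [this]; group
    exact hne (by rw [this])
  have hctx : Commute x (x * y⁻¹) := (Commute.refl x).mul_right hxyinv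
  -- P g: g is in the subgroup generated by x and t
  set t := x * y⁻¹ with htdef
  set P : G → Prop := fun g => ∃ i j : ℤ, g = x ^ i * t ^ j with hPdef
  have hPx : P x := ⟨1, 0, by norm_num⟩
  have hPt : P t := ⟨0, 1, by norm_num⟩
  have hP1 : P 1 := ⟨0, 0, by norm_num⟩
  have hPmul : ∀ g h : G, P g → P h → P (g * h) := by
    rintro g h ⟨i, j, rfl⟩ ⟨i', j', rfl⟩
    refine ⟨i + i', j + j', ?_⟩
    rw [zpow_add, zpow_add]
    calc x ^ i * t ^ j * (x ^ i' * t ^ j')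
        = x ^ i * (t ^ j * x ^ i') * t ^ j' := by group
      _ = x ^ i * (x ^ i' * t ^ j) * t ^ j' := by rw [((hctx.zpow_zpow i' j).symm).eq]
      _ = x ^ i * x ^ i' * (t ^ j * t ^ j') := by group
  have hPinv : ∀ g : G, P g → P g⁻¹ := by
    rintro g ⟨i, j, rfl⟩
    refine ⟨-i, -j, ?_⟩
    rw [mul_inv_rev, ← zpow_neg, ← zpow_neg]
    exact ((hctx.zpow_zpow (-i) (-j)).eq).symm
  have hnt : ∀ k : ℤ, t ≠ x ^ k := by
    intro k hk
    have : y⁻¹ = x⁻¹ * x ^ k := by rw [← hk, htdef]; group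
    have hmem : y⁻¹ ∈ zpowers x := this ▸ mul_mem (inv_mem (mem_zpowers x))
      (zpow_mem (mem_zpowers x) k)
    exact hyZx (by simpa using inv_mem hmem)
  have ht_inv : t⁻¹ = t := inv_eq_of_mul_eq_one_right ht2
  have hy_eq : y = t * x := by
    have h0 : t * y = x := by rw [htdef]; group
    calc y = t⁻¹ * (t * y) := by group
      _ = t⁻¹ * x := by rw [h0]
      _ = t * x := by rw [ht_inv]
  have hP4 : ∀ g : G, orderOf g = 4 → P g := by
    intro g hg
    rcases h2 g (Or.inr (Or.inl hg)) with hh | hh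
    · obtain ⟨k, hk⟩ := mem_of_zpowers_eq hh
      exact ⟨k, 0, by rw [← hk]; norm_num⟩
    · obtain ⟨k, hk⟩ := mem_of_zpowers_eq hh
      have hk' : y ^ k = g := hk
      refine ⟨k, k, ?_⟩
      rw [← hk', hy_eq, (hctx.symm).mul_zpow, ((hctx.zpow_zpow k k).symm).eq]
  by_cases hall : ∀ g : G, P g
  · exact Or.inl (isoC4C2 x t hx ht2 ht1 hctx.eq hnt hall)
  · right
    push_neg at hall
    obtain ⟨s, hsP⟩ := hall
    have hnotP_sq : ∀ g : G, ¬ P g → g * g = 1 := by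
      intro g hg
      rcases horder124 g with h | h | h
      · exact absurd (by rw [orderOf_eq_one_iff.mp h]; exact hP1) hg
      · exact pow2_eq_one h
      · exact absurd (hP4 g h) hg
    have hs2 : s * s = 1 := hnotP_sq s hsP
    have hsinv : s⁻¹ = s := inv_eq_of_mul_eq_one_right hs2
    have hPs_mul : ∀ h : G, P h → ¬ P (s * h) := by
      intro h hPh hc
      have : s = (s * h) * h⁻¹ := by group
      exact hsP (this ▸ hPmul _ _ hc (hPinv _ hPh))
    have hsx : s * x * s = x⁻¹ := by
      have hq := hnotP_sq _ (hPs_mul x hPx)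
      have h1' : s * x * s * x = 1 := by
        calc s * x * s * x = (s * x) * (s * x) := by group
          _ = 1 := hq
      exact eq_inv_of_mul_eq_one_left h1'
    have hst : s * t = t * s := by
      have hq := hnotP_sq _ (hPs_mul t hPt)
      have h1' : s * t * s = t⁻¹ := by
        apply eq_inv_of_mul_eq_one_left
        calc s * t * s * t = (s * t) * (s * t) := by group
          _ = 1 := hq
      have ht_inv : t⁻¹ = t := inv_eq_of_mul_eq_one_right ht2
      rw [ht_inv] at h1'
      calc s * t = s * t * (s * s) := by rw [hs2, mul_one]
        _ = (s * t * s) * s := by group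
        _ = t * s := by rw [h1']
    have hcov : ∀ g : G, P g ∨ P (s * g) := by
      intro g
      by_cases hPg : P g
      · exact Or.inl hPg
      right
      by_contra hq
      have hg2 : g * g = 1 := hnotP_sq g hPg
      have hginv : g⁻¹ = g := inv_eq_of_mul_eq_one_right hg2
      have hnotPgx : ¬ P (g * x) := by
        intro hc
        have : g = (g * x) * x⁻¹ := by group
        exact hPg (this ▸ hPmul _ _ hc (hPinv _ hPx))
      have hgx : g * x * g = x⁻¹ := by
        have hq' := hnotP_sq _ hnotPgx
        have h1' : g * x * g * x = 1 := by
          calc g * x * g * x = (g * x) * (g * x) := by group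
          _ = 1 := hq'
        exact eq_inv_of_mul_eq_one_left h1'
      have hqq : (s * g) * (s * g) = 1 := hnotP_sq _ hq
      have hqinv : (s * g)⁻¹ = s * g := inv_eq_of_mul_eq_one_right hqq
      have e1 : (s*g) * x * (s*g)⁻¹ = s * (g * x * g⁻¹) * s⁻¹ := by group
      rw [hginv, hgx, hsinv] at e1
      have e2 : s * x⁻¹ * s = x := by
        have e2' : (s * x * s)⁻¹ = s⁻¹ * x⁻¹ * s⁻¹ := by group
        rw [hsinv] at e2'
        rw [← e2', hsx, inv_inv]
      have e3 : (s*g) * x * (s*g)⁻¹ = x := by rw [e1, e2]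
      have hnotPr : ¬ P ((s * g) * x) := by
        intro hc
        have : s * g = ((s * g) * x) * x⁻¹ := by group
        exact hq (this ▸ hPmul _ _ hc (hPinv _ hPx))
      have hr2 := hnotP_sq _ hnotPr
      have : x * x = 1 := by
        calc x * x = ((s*g) * x * (s*g)⁻¹) * x := by rw [e3]
          _ = ((s*g) * x) * ((s*g)⁻¹ * x) := by group
          _ = ((s*g) * x) * ((s*g) * x) := by rw [hqinv]
          _ = 1 := hr2
      exact hx2ne1 this
    apply isoD8C2 x t s hx ht2 ht1 hctx.eq hst hs2 hsx hnt
    · intro i j hc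
      exact hsP ⟨i, j, hc⟩
    · intro g
      rcases hcov g with h | h
      · exact Or.inl h
      · obtain ⟨i, j, hij⟩ := h
        right
        refine ⟨i, j, ?_⟩
        calc g = s * (s * g) := by rw [← mul_assoc, hs2, one_mul]
          _ = s * (x ^ i * t ^ j) := by rw [hij]
          _ = s * x ^ i * t ^ j := by group
end W


section Final
variable {G : Type*} [Group G] [Finite G]

lemma forward_classify
    (hc : Nat.card {H : Subgroup G // IsCyclic H} = Nat.card G - 2) :
    (Nonempty (G ≃* Multiplicative (ZMod 4 × ZMod 2)) ∨
     Nonempty (G ≃* DihedralGroup 4 × Multiplicative (ZMod 2)) ∨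
     Nonempty (G ≃* Multiplicative (ZMod 6)) ∨
     Nonempty (G ≃* DihedralGroup 6)) := by
  obtain ⟨a, b, ha, hb, hne, h1, h2⟩ := count_structure hc
  have h2s : ∀ g : G, (orderOf g = 3 ∨ orderOf g = 4 ∨ orderOf g = 6) →
      zpowers g = zpowers b ∨ zpowers g = zpowers a := fun g hg => (h2 g hg).symm
  rcases ha with ha | ha | ha <;> rcases hb with hb | hb | hb
  · exact (case33 ha hb hne (fun g hg => h2 g (Or.inl hg))).elim
  · exact (case34 ha hb h1 h2).elim
  · rcases case36 ha hb h1 h2 with h | h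
    · exact Or.inr (Or.inr (Or.inl h))
    · exact Or.inr (Or.inr (Or.inr h))
  · exact (case34 hb ha h1 h2s).elim
  · rcases case44 ha hb hne h1 h2 with h | h
    · exact Or.inl h
    · exact Or.inr (Or.inl h)
  · -- a order 4, b order 6 : impossible
    exfalso
    have h3 : orderOf (b * b) = 3 := by rw [← pow_two, orderOf_pow, hb]; decide
    rcases h2 (b * b) (Or.inl h3) with hh | hh
    · have := orderOf_eq_of_zpowers_eq hh; rw [h3, ha] at this; omega
    · have := orderOf_eq_of_zpowers_eq hh; rw [h3, hb] at this; omega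
  · rcases case36 hb ha h1 h2s with h | h
    · exact Or.inr (Or.inr (Or.inl h))
    · exact Or.inr (Or.inr (Or.inr h))
  · exfalso
    have h3 : orderOf (a * a) = 3 := by rw [← pow_two, orderOf_pow, ha]; decide
    rcases h2 (a * a) (Or.inl h3) with hh | hh
    · have := orderOf_eq_of_zpowers_eq hh; rw [h3, ha] at this; omega
    · have := orderOf_eq_of_zpowers_eq hh; rw [h3, hb] at this; omega
  · exfalso
    have h3 : orderOf (a * a) = 3 := by rw [← pow_two, orderOf_pow, ha]; decide
    rcases h2 (a * a) (Or.inl h3) with hh | hh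
    · have := orderOf_eq_of_zpowers_eq hh; rw [h3, ha] at this; omega
    · have := orderOf_eq_of_zpowers_eq hh; rw [h3, hb] at this; omega

end Final

theorem stmt_2 (G : Type*) [Group G] [Finite G] :
    Nat.card {H : Subgroup G // IsCyclic H} = Nat.card G - 2 ↔
      (Nonempty (G ≃* Multiplicative (ZMod 4 × ZMod 2)) ∨
       Nonempty (G ≃* DihedralGroup 4 × Multiplicative (ZMod 2)) ∨
       Nonempty (G ≃* Multiplicative (ZMod 6)) ∨
       Nonempty (G ≃* DihedralGroup 6)) := by
  constructor
  · exact forward_classify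
  · intro h
    have step : ∀ (K : Type) [Group K] [Fintype K] [DecidableEq K],
        Nat.card {H : Subgroup K // IsCyclic H} = Nat.card K - 2 →
        (G ≃* K) → Nat.card {H : Subgroup G // IsCyclic H} = Nat.card G - 2 := by
      intro K _ _ _ hK e
      rw [card_cyclic_congr e, Nat.card_congr e.toEquiv]
      exact hK
    rcases h with h | h | h | h
    · obtain ⟨e⟩ := h
      refine step _ ?_ e
      rw [card_cyclic_eq_image, Nat.card_eq_fintype_card]
      decide
    · obtain ⟨e⟩ := h
      refine step _ ?_ e
      rw [card_cyclic_eq_image, Nat.card_eq_fintype_card]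
      decide
    · obtain ⟨e⟩ := h
      refine step _ ?_ e
      rw [card_cyclic_eq_image, Nat.card_eq_fintype_card]
      decide
    · obtain ⟨e⟩ := h
      refine step _ ?_ e
      rw [card_cyclic_eq_image, Nat.card_eq_fintype_card]
      decide
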